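/- Let R be a commutative ring with unity. The strong metric dimension of the clean graph Cl(R) is finite if and only if the graph Cl(R) is finite; likewise, if R has a non-trivial idempotent (so that Cl₂(R) is connected), the strong metric dimension of Cl₂(R) is finite if and only if Cl₂(R) is finite. -/

import Mathlib

variable {V : Type*}

/-- In a graph `G`, `u` is maximally distant from `v` if `d(v,w) ≤ d(u,v)` for every
neighbour `w` of `u`. -/
def IsMaxDistFrom (G : SimpleGraph V) (u v : V) : Prop :=
  ∀ w ∈ G.neighborSet u, G.dist v w ≤ G.dist u v

/-- `u` and `v` are mutually maximally distant in `G`. -/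
def IsMMD (G : SimpleGraph V) (u v : V) : Prop :=
  IsMaxDistFrom G u v ∧ IsMaxDistFrom G v u

/-- The boundary of a graph: the set of vertices that are mutually maximally distant
from some other vertex.  This is the vertex set of the strong resolving graph. -/
def graphBoundary (G : SimpleGraph V) : Set V :=
  {u | ∃ v, u ≠ v ∧ IsMMD G u v}

/-- The strong resolving graph, realised on the full vertex set (vertices outside the
boundary are isolated): two distinct vertices are adjacent iff they are mutually
maximally distant. -/
def srGraph (G : SimpleGraph V) : SimpleGraph V where
  Adj u v := u ≠ v ∧ IsMMD G u v
  symm := ⟨fun u v h => ⟨h.1.symm, h.2.2, h.2.1⟩⟩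
  loopless := ⟨fun u h => h.1 rfl⟩

/-- The independence number of a graph: the largest cardinality of a finite set of
pairwise non-adjacent vertices. -/
noncomputable def indNum (G : SimpleGraph V) : ℕ :=
  sSup {n | ∃ s : Finset V, ((s : Set V).Pairwise fun a b => ¬ G.Adj a b) ∧ s.card = n}

/-- `S` is a strong resolving set of `G`: every pair of distinct vertices `u, v` is
strongly resolved by some `w ∈ S`, i.e. `v` lies on a shortest `u`-`w` path or `u` lies
on a shortest `v`-`w` path. -/
def IsStrongResolvingSet (G : SimpleGraph V) (S : Set V) : Prop :=
  ∀ u v : V, u ≠ v → ∃ w ∈ S,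
    G.dist u w = G.dist u v + G.dist v w ∨ G.dist v w = G.dist v u + G.dist u w

/-- The strong metric dimension of a graph: the smallest cardinality of a (finite)
strong resolving set. -/
noncomputable def sdim (G : SimpleGraph V) : ℕ :=
  sInf {n | ∃ S : Finset V, IsStrongResolvingSet G (S : Set V) ∧ S.card = n}

/-- Vertices of the clean graph: pairs `(e, u)` with `e` an idempotent and `u` a unit. -/
abbrev CleanVtx (R : Type*) [CommRing R] : Type _ := {e : R // IsIdempotentElem e} × Rˣ

/-- The clean graph `Cl(R)` of a commutative ring `R`: distinct vertices `(e,u)`, `(f,v)`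
are adjacent iff `e * f = 0` or `u * v = 1`. -/
def cleanGraph (R : Type*) [CommRing R] : SimpleGraph (CleanVtx R) where
  Adj x y := x ≠ y ∧ ((x.1 : R) * (y.1 : R) = 0 ∨ (x.2 : R) * (y.2 : R) = 1)
  symm := by
    constructor
    rintro x y ⟨hxy, h | h⟩
    · exact ⟨hxy.symm, Or.inl (by rwa [mul_comm])⟩
    · exact ⟨hxy.symm, Or.inr (by rwa [mul_comm])⟩
  loopless := ⟨fun x h => h.1 rfl⟩

/-- The vertex set of `Cl₂(R)`: clean vertices `(e,u)` with `e ≠ 0`. -/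
def clean2Set (R : Type*) [CommRing R] : Set (CleanVtx R) := {x | (x.1 : R) ≠ 0}

/-- `Cl₂(R)`, the subgraph of `Cl(R)` induced on the vertices `(e,u)` with `e ≠ 0`. -/
def clean2Graph (R : Type*) [CommRing R] : SimpleGraph (clean2Set R) :=
  SimpleGraph.induce (clean2Set R) (cleanGraph R)

/-- `U''(R)`: the set of units `u` with `u² ≠ 1`. -/
def uSecond (R : Type*) [CommRing R] : Set Rˣ := {u | (u : R) * (u : R) ≠ 1}

/-- `|Id(R)*|`: the number of non-trivial idempotents of `R`. -/
noncomputable def idStarNum (R : Type*) [CommRing R] : ℕ :=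
  {e : R | IsIdempotentElem e ∧ e ≠ 0 ∧ e ≠ 1}.ncard

/-- `|Id⊥(R)*|`: the maximum cardinality of a set of nonzero pairwise orthogonal
idempotents of `R`. -/
noncomputable def orthIdemNum (R : Type*) [CommRing R] : ℕ :=
  sSup {n | ∃ s : Finset R, (∀ e ∈ s, IsIdempotentElem e ∧ e ≠ 0) ∧
    ((s : Set R).Pairwise fun e f => e * f = 0) ∧ s.card = n}

section Aux

open SimpleGraph

variable {W : Type*}

lemma dist_le_one_of_eq_or_adj (G : SimpleGraph W) {a b : W} (h : a = b ∨ G.Adj a b) :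
    G.dist a b ≤ 1 := by
  rcases h with rfl | h
  · simp [SimpleGraph.dist_self]
  · exact le_of_eq ((SimpleGraph.dist_eq_one_iff_adj).2 h)

lemma finite_of_srs (G : SimpleGraph W) (hconn : ∀ u v : W, G.Reachable u v)
    (D : ℕ) (hD : ∀ u v : W, G.dist u v ≤ D)
    (S : Set W) (hSfin : S.Finite) (hS : IsStrongResolvingSet G S) : Finite W := by
  classical
  let T := hSfin.toFinset
  have hf : Function.Injective
      (fun v : W => fun w : T => (⟨G.dist v w, Nat.lt_succ_of_le (hD v w)⟩ : Fin (D + 1))) := by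
    intro u v huv
    by_contra hne
    obtain ⟨w, hwS, hcase⟩ := hS u v hne
    have heq : G.dist u w = G.dist v w := by
      have := congrFun huv ⟨w, hSfin.mem_toFinset.2 hwS⟩
      simpa [Fin.ext_iff] using this
    have hpos : 0 < G.dist u v := (hconn u v).pos_dist_of_ne hne
    rcases hcase with h | h
    · rw [heq] at h; omega
    · have hc : G.dist v u = G.dist u v := SimpleGraph.dist_comm
      rw [hc, ← heq] at h; omega
  exact Finite.of_injective _ hf

lemma srs_univ (G : SimpleGraph W) : IsStrongResolvingSet G (Set.univ : Set W) := by
  intro u v _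
  exact ⟨v, Set.mem_univ v, Or.inl (by simp [SimpleGraph.dist_self])⟩

end Aux

section CleanProofs

variable {R : Type*} [CommRing R]

/-- The special vertex `(0, 1)` of the clean graph. -/
noncomputable def zVtx (R : Type*) [CommRing R] : CleanVtx R :=
  (⟨0, by simp [IsIdempotentElem]⟩, 1)

lemma eq_or_adj_zVtx (x : CleanVtx R) : x = zVtx R ∨ (cleanGraph R).Adj x (zVtx R) := by
  by_cases h : x = zVtx R
  · exact Or.inl h
  · exact Or.inr ⟨h, Or.inl (by simp [zVtx])⟩

lemma cleanGraph_reachable (u v : CleanVtx R) : (cleanGraph R).Reachable u v := by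
  have h1 : (cleanGraph R).Reachable u (zVtx R) := by
    rcases eq_or_adj_zVtx u with h | h
    · exact h ▸ SimpleGraph.Reachable.refl _
    · exact h.reachable
  have h2 : (cleanGraph R).Reachable v (zVtx R) := by
    rcases eq_or_adj_zVtx v with h | h
    · exact h ▸ SimpleGraph.Reachable.refl _
    · exact h.reachable
  exact h1.trans h2.symm

lemma cleanGraph_connected : (cleanGraph R).Connected :=
  have : Nonempty (CleanVtx R) := ⟨zVtx R⟩
  ⟨cleanGraph_reachable⟩

lemma cleanGraph_dist_le (u v : CleanVtx R) : (cleanGraph R).dist u v ≤ 2 := by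
  have := cleanGraph_connected (R := R)
  calc (cleanGraph R).dist u v
      ≤ (cleanGraph R).dist u (zVtx R) + (cleanGraph R).dist (zVtx R) v :=
        this.dist_triangle
    _ ≤ 1 + 1 := by
        refine add_le_add (dist_le_one_of_eq_or_adj _ (eq_or_adj_zVtx u)) ?_
        rw [SimpleGraph.dist_comm]
        exact dist_le_one_of_eq_or_adj _ (eq_or_adj_zVtx v)

section Clean2

variable {e0 : R} (he0 : IsIdempotentElem e0) (hne0 : e0 ≠ 0) (hne1 : e0 ≠ 1)

/-- The vertex `(e₀, u⁻¹)` of `Cl₂(R)`. -/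
def aVtx (he0 : IsIdempotentElem e0) (hne0 : e0 ≠ 0) (x : clean2Set R) : clean2Set R :=
  ⟨(⟨e0, he0⟩, (x.1.2)⁻¹), hne0⟩

/-- The vertex `(1 - e₀, u⁻¹)` of `Cl₂(R)`. -/
def bVtx (he0 : IsIdempotentElem e0) (hne1 : e0 ≠ 1) (x : clean2Set R) : clean2Set R :=
  ⟨(⟨1 - e0, he0.one_sub⟩, (x.1.2)⁻¹), fun h => hne1 (by
    have : (1 : R) - e0 = 0 := h
    linear_combination -this)⟩

lemma eq_or_adj_aVtx (x : clean2Set R) :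
    x = aVtx he0 hne0 x ∨ (clean2Graph R).Adj x (aVtx he0 hne0 x) := by
  by_cases h : x = aVtx he0 hne0 x
  · exact Or.inl h
  · refine Or.inr ?_
    show (cleanGraph R).Adj x.1 (aVtx he0 hne0 x).1
    exact ⟨fun hv => h (Subtype.ext hv), Or.inr (Units.mul_inv _)⟩

lemma eq_or_adj_bVtx (x : clean2Set R) :
    x = bVtx he0 hne1 x ∨ (clean2Graph R).Adj x (bVtx he0 hne1 x) := by
  by_cases h : x = bVtx he0 hne1 x
  · exact Or.inl h
  · refine Or.inr ?_
    show (cleanGraph R).Adj x.1 (bVtx he0 hne1 x).1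
    exact ⟨fun hv => h (Subtype.ext hv), Or.inr (Units.mul_inv _)⟩

lemma adj_aVtx_bVtx (x y : clean2Set R) :
    (clean2Graph R).Adj (aVtx he0 hne0 x) (bVtx he0 hne1 y) := by
  show (cleanGraph R).Adj (aVtx he0 hne0 x).1 (bVtx he0 hne1 y).1
  refine ⟨?_, Or.inl ?_⟩
  · intro h
    have h1 : e0 = 1 - e0 := congrArg (fun p => (p.1 : R)) h
    have : e0 * e0 = e0 * (1 - e0) := by rw [← h1]
    rw [he0] at this
    apply hne0
    have h2 : e0 * (1 - e0) = e0 - e0 * e0 := by ring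
    rw [he0] at h2
    simpa [h2] using this
  · show e0 * (1 - e0) = 0
    have h2 : e0 * (1 - e0) = e0 - e0 * e0 := by ring
    rw [he0] at h2
    simp [h2]

lemma clean2_reachable (he0 : IsIdempotentElem e0) (hne0 : e0 ≠ 0) (hne1 : e0 ≠ 1)
    (u v : clean2Set R) : (clean2Graph R).Reachable u v := by
  have h1 : (clean2Graph R).Reachable u (aVtx he0 hne0 u) := by
    rcases eq_or_adj_aVtx he0 hne0 u with h | h
    · exact h ▸ SimpleGraph.Reachable.refl _
    · exact h.reachable
  have h2 : (clean2Graph R).Reachable (aVtx he0 hne0 u) (bVtx he0 hne1 v) :=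
    (adj_aVtx_bVtx he0 hne0 hne1 u v).reachable
  have h3 : (clean2Graph R).Reachable v (bVtx he0 hne1 v) := by
    rcases eq_or_adj_bVtx he0 hne1 v with h | h
    · exact h ▸ SimpleGraph.Reachable.refl _
    · exact h.reachable
  exact (h1.trans h2).trans h3.symm

lemma clean2_connected (he0 : IsIdempotentElem e0) (hne0 : e0 ≠ 0) (hne1 : e0 ≠ 1) :
    (clean2Graph R).Connected :=
  have : Nonempty (clean2Set R) := ⟨⟨(⟨e0, he0⟩, 1), hne0⟩⟩
  ⟨clean2_reachable he0 hne0 hne1⟩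

lemma clean2_dist_le (he0 : IsIdempotentElem e0) (hne0 : e0 ≠ 0) (hne1 : e0 ≠ 1)
    (u v : clean2Set R) : (clean2Graph R).dist u v ≤ 3 := by
  have hc := clean2_connected he0 hne0 hne1
  calc (clean2Graph R).dist u v
      ≤ (clean2Graph R).dist u (aVtx he0 hne0 u) +
        (clean2Graph R).dist (aVtx he0 hne0 u) v := hc.dist_triangle
    _ ≤ (clean2Graph R).dist u (aVtx he0 hne0 u) +
        ((clean2Graph R).dist (aVtx he0 hne0 u) (bVtx he0 hne1 v) +
         (clean2Graph R).dist (bVtx he0 hne1 v) v) := by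
          exact add_le_add_right hc.dist_triangle _
    _ ≤ 1 + (1 + 1) := by
        refine add_le_add (dist_le_one_of_eq_or_adj _ (eq_or_adj_aVtx he0 hne0 u)) ?_
        refine add_le_add (dist_le_one_of_eq_or_adj _ (Or.inr (adj_aVtx_bVtx he0 hne0 hne1 u v))) ?_
        rw [SimpleGraph.dist_comm]
        exact dist_le_one_of_eq_or_adj _ (eq_or_adj_bVtx he0 hne1 v)

end Clean2

end CleanProofs

theorem statement_12 (R : Type*) [CommRing R] :
    ((∃ S : Set (CleanVtx R), S.Finite ∧ IsStrongResolvingSet (cleanGraph R) S) ↔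
      Finite (CleanVtx R)) ∧
    ((∃ e : R, IsIdempotentElem e ∧ e ≠ 0 ∧ e ≠ 1) →
      ((∃ S : Set (clean2Set R), S.Finite ∧ IsStrongResolvingSet (clean2Graph R) S) ↔
        Finite (clean2Set R))) := by
  constructor
  · constructor
    · rintro ⟨S, hfin, hsrs⟩
      exact finite_of_srs _ cleanGraph_reachable 2 cleanGraph_dist_le S hfin hsrs
    · intro h
      exact ⟨Set.univ, Set.finite_univ, srs_univ _⟩
  · rintro ⟨e0, he0, hne0, hne1⟩
    constructor
    · rintro ⟨S, hfin, hsrs⟩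
      exact finite_of_srs _ (clean2_reachable he0 hne0 hne1) 3
        (clean2_dist_le he0 hne0 hne1) S hfin hsrs
    · intro h
      exact ⟨Set.univ, Set.finite_univ, srs_univ _⟩
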